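/- Let A ∈ ℝ^{n×r} have unit-norm columns a₁,…,a_r with ‖Id_r − AᵀA‖ ≤ ε (operator norm), and let E ∈ (ℝⁿ)^{⊗3} with ‖E‖_F² ≤ ε·r. Define, for v ∈ ℝⁿ, the contraction M_v(E) ∈ ℝ^{n×n}. Then Σ_{i=1}^r ‖M_{a_i}(E)‖_F² ≤ (1+ε)·ε·r, and hence at least half of the indices i ∈ [r] satisfy ‖M_{a_i}(E)‖_F² ≤ 4ε (for ε ≤ 1). -/

import Mathlib

open Matrix

/-- If `A` has unit columns `aᵢ` with `‖Id − AᵀA‖ ≤ ε` (operator norm, stated via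
quadratic forms), and `E` is a 3-tensor with `‖E‖_F² ≤ ε·r`, then
`Σᵢ ‖M_{aᵢ}(E)‖_F² ≤ (1+ε)·ε·r`, and (for `ε ≤ 1`) at least half of the indices
`i` satisfy `‖M_{aᵢ}(E)‖_F² ≤ 4ε`.  Here `M_v(E)_{jk} = Σ_ℓ E_{jkℓ} v_ℓ`. -/
theorem stmt_13 {n r : ℕ} (ε : ℝ) (A : Matrix (Fin n) (Fin r) ℝ)
    (hunit : ∀ i, (fun j => A j i) ⬝ᵥ (fun j => A j i) = 1)
    (hop : ∀ v : Fin r → ℝ,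
      |v ⬝ᵥ (((1 : Matrix (Fin r) (Fin r) ℝ) - Aᵀ * A) *ᵥ v)| ≤ ε * (v ⬝ᵥ v))
    (E : Fin n → Fin n → Fin n → ℝ)
    (hE : ∑ j, ∑ k, ∑ l, (E j k l) ^ 2 ≤ ε * r) :
    (∑ i, ∑ j, ∑ k, (∑ l, E j k l * A l i) ^ 2 ≤ (1 + ε) * ε * r) ∧
    (ε ≤ 1 → r ≤ 2 * (Finset.univ.filter
      (fun i : Fin r => ∑ j, ∑ k, (∑ l, E j k l * A l i) ^ 2 ≤ 4 * ε)).card) := by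
  rcases Nat.eq_zero_or_pos r with hr | hr
  · subst hr
    refine ⟨by simp, fun _ => by simp⟩
  -- ε is nonnegative
  have hε : 0 ≤ ε := by
    have i : Fin r := ⟨0, hr⟩
    have h := hop (Pi.single i 1)
    have h1 : (Pi.single i 1 : Fin r → ℝ) ⬝ᵥ Pi.single i 1 = 1 := by
      simp [dotProduct, Pi.single_apply]
    have h2 : (Pi.single i 1 : Fin r → ℝ) ⬝ᵥ
        (((1 : Matrix (Fin r) (Fin r) ℝ) - Aᵀ * A) *ᵥ Pi.single i 1) = 0 := by
      have hu := hunit i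
      simp only [dotProduct] at hu
      simp [dotProduct, mulVec, Matrix.sub_apply, Matrix.mul_apply, Matrix.one_apply,
        Pi.single_apply, Finset.mul_sum, Finset.sum_ite_eq', transpose_apply]
      linarith [hu]
    rw [h1, h2] at h
    simpa using h
  -- key singular-value bound: for any w, ‖Aᵀ w‖² ≤ (1+ε) ‖w‖²
  have key : ∀ w : Fin n → ℝ,
      ∑ i, (∑ l, w l * A l i) ^ 2 ≤ (1 + ε) * ∑ l, (w l) ^ 2 := by
    intro w
    set u : Fin r → ℝ := fun i => ∑ l, w l * A l i with hu
    set T : ℝ := ∑ l, (∑ i, A l i * u i) ^ 2 with hT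
    set U : ℝ := ∑ i, (u i) ^ 2 with hU
    set W : ℝ := ∑ l, (w l) ^ 2 with hW
    have hUnn : 0 ≤ U := Finset.sum_nonneg fun _ _ => sq_nonneg _
    have hWnn : 0 ≤ W := Finset.sum_nonneg fun _ _ => sq_nonneg _
    have e1 : u ⬝ᵥ ((Aᵀ * A) *ᵥ u) = T := by
      rw [← mulVec_mulVec, dotProduct_mulVec, vecMul_transpose]
      simp [dotProduct, mulVec, hT, sq]
    have hTU : T ≤ (1 + ε) * U := by
      have h := (abs_le.mp (hop u)).1
      have hq : u ⬝ᵥ (((1 : Matrix (Fin r) (Fin r) ℝ) - Aᵀ * A) *ᵥ u) = U - T := by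
        rw [sub_mulVec, dotProduct_sub, one_mulVec, e1]
        congr 1
        simp [dotProduct, hU, sq]
      have hud : u ⬝ᵥ u = U := by simp [dotProduct, hU, sq]
      rw [hq, hud] at h
      linarith
    have hUw : U = ∑ l, w l * (∑ i, A l i * u i) := by
      have e2 : U = ∑ i, ∑ l, w l * (A l i * u i) := by
        rw [hU]
        refine Finset.sum_congr rfl fun i _ => ?_
        calc (u i) ^ 2 = (∑ l, w l * A l i) * u i := by rw [sq]
          _ = ∑ l, w l * (A l i * u i) := by
              rw [Finset.sum_mul]
              exact Finset.sum_congr rfl fun l _ => by ring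
      rw [e2, Finset.sum_comm]
      exact Finset.sum_congr rfl fun l _ => by rw [Finset.mul_sum]
    have hcs : U ^ 2 ≤ W * T := by
      rw [hUw]
      exact Finset.sum_mul_sq_le_sq_mul_sq _ _ _
    show U ≤ (1 + ε) * W
    rcases eq_or_lt_of_le hUnn with h0 | h0
    · have : 0 ≤ (1 + ε) * W := mul_nonneg (by linarith) hWnn
      linarith
    · nlinarith
  -- Part 1
  have part1 : ∑ i, ∑ j, ∑ k, (∑ l, E j k l * A l i) ^ 2 ≤ (1 + ε) * ε * r := by
    have hswap : ∑ i, ∑ j, ∑ k, (∑ l, E j k l * A l i) ^ 2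
        = ∑ j, ∑ k, ∑ i, (∑ l, E j k l * A l i) ^ 2 := by
      rw [Finset.sum_comm]
      exact Finset.sum_congr rfl fun j _ => Finset.sum_comm
    rw [hswap]
    calc ∑ j, ∑ k, ∑ i, (∑ l, E j k l * A l i) ^ 2
        ≤ ∑ j, ∑ k, (1 + ε) * ∑ l, (E j k l) ^ 2 := by
          refine Finset.sum_le_sum fun j _ => Finset.sum_le_sum fun k _ => ?_
          exact key (fun l => E j k l)
      _ = (1 + ε) * ∑ j, ∑ k, ∑ l, (E j k l) ^ 2 := by
          simp [Finset.mul_sum]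
      _ ≤ (1 + ε) * (ε * r) := by
          exact mul_le_mul_of_nonneg_left hE (by linarith)
      _ = (1 + ε) * ε * r := by ring
  refine ⟨part1, fun hε1 => ?_⟩
  -- Part 2 : Markov
  set val : Fin r → ℝ := fun i => ∑ j, ∑ k, (∑ l, E j k l * A l i) ^ 2 with hval
  have hvnn : ∀ i, 0 ≤ val i := fun i =>
    Finset.sum_nonneg fun _ _ => Finset.sum_nonneg fun _ _ => sq_nonneg _
  set S := Finset.univ.filter (fun i : Fin r => val i ≤ 4 * ε) with hS
  set B := Finset.univ.filter (fun i : Fin r => ¬ (val i ≤ 4 * ε)) with hB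
  have hcard : S.card + B.card = r := by
    rw [hS, hB, Finset.card_filter_add_card_filter_not]
    simp
  have hBsum : (B.card : ℝ) * (4 * ε) ≤ ∑ i ∈ B, val i := by
    have := Finset.card_nsmul_le_sum B val (4 * ε)
      (fun i hi => le_of_lt (by
        rw [hB, Finset.mem_filter] at hi
        exact lt_of_not_ge hi.2))
    simpa [nsmul_eq_mul] using this
  have hBtot : ∑ i ∈ B, val i ≤ ∑ i, val i :=
    Finset.sum_le_sum_of_subset_of_nonneg (Finset.subset_univ _)
      (fun i _ _ => hvnn i)
  have htot : ∑ i, val i ≤ 2 * ε * r := by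
    calc ∑ i, val i ≤ (1 + ε) * ε * r := part1
      _ ≤ 2 * ε * r := by
          have hrn : (0:ℝ) ≤ (r:ℝ) := Nat.cast_nonneg r
          nlinarith [mul_nonneg (mul_nonneg (by linarith : (0:ℝ) ≤ 1 - ε) hε) hrn]
  have hkey : (B.card : ℝ) * (4 * ε) ≤ 2 * ε * r := le_trans hBsum (le_trans hBtot htot)
  rcases eq_or_lt_of_le hε with h0 | h0
  · -- ε = 0 : every index is good
    have hall : ∀ i : Fin r, val i ≤ 4 * ε := by
      intro i
      have h1 : val i ≤ ∑ i', val i' := Finset.single_le_sum (fun i' _ => hvnn i') (Finset.mem_univ i)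
      have h2 : (2 : ℝ) * ε * r = 0 := by rw [← h0]; ring
      rw [← h0]
      linarith [le_trans h1 htot]
    have : S = Finset.univ := by
      rw [hS, Finset.filter_true_of_mem fun i _ => hall i]
    rw [this]
    simp
    omega
  · have hB2 : 2 * B.card ≤ r := by
      have h2 : (B.card : ℝ) * 2 ≤ r := by
        have h3 : ((B.card : ℝ) * 2) * (2 * ε) ≤ (r : ℝ) * (2 * ε) := by nlinarith [hkey]
        exact le_of_mul_le_mul_right h3 (by linarith)
      have h4 : ((2 * B.card : ℕ) : ℝ) ≤ ((r : ℕ) : ℝ) := by push_cast; linarith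
      exact_mod_cast h4
    omega
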